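/- For any non-zero v ∈ Z_n × Z_n, state a ∈ Σ, and k ∈ ℕ such that |⟨v⟩| divides k and k ≤ n², the number of configurations s : Z_n × Z_n → Σ that are shift-symmetric w.r.t. v and have exactly k cells in state a equals C(n²/|⟨v⟩|, k/|⟨v⟩|)·(|Σ|−1)^((n²−k)/|⟨v⟩|). -/

import Mathlib

open Finset

private lemma fiber_count {Q A : Type} [Fintype Q] [Fintype A] [DecidableEq Q] [DecidableEq A]
    (a : A) (S : Finset Q) :
    Nat.card {f : Q → A // Finset.univ.filter (fun q => f q = a) = S} =
      (Fintype.card A - 1) ^ (Fintype.card Q - S.card) := by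
  have e : {f : Q → A // Finset.univ.filter (fun q => f q = a) = S} ≃
      ((Sᶜ : Finset Q) → {b : A // b ≠ a}) := {
    toFun := fun f q => ⟨f.1 q.1, by
      intro h
      have hq : q.1 ∈ Finset.univ.filter (fun q => f.1 q = a) := by simp [h]
      rw [f.2] at hq
      exact (Finset.mem_compl.mp q.2) hq⟩
    invFun := fun g => ⟨fun q => if h : q ∈ S then a else (g ⟨q, Finset.mem_compl.mpr h⟩).1, by
      ext q
      simp only [Finset.mem_filter, Finset.mem_univ, true_and]
      constructor
      · intro h
        by_contra hq
        rw [dif_neg hq] at h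
        exact (g ⟨q, Finset.mem_compl.mpr hq⟩).2 h
      · intro h; rw [dif_pos h]⟩
    left_inv := fun f => by
      ext q
      by_cases h : q ∈ S
      · simp only [dif_pos h]
        have hq : q ∈ Finset.univ.filter (fun q => f.1 q = a) := by rw [f.2]; exact h
        exact ((Finset.mem_filter.mp hq).2).symm
      · simp [dif_neg h]
    right_inv := fun g => by
      ext q
      simp [Finset.mem_compl.mp q.2] }
  rw [Nat.card_congr e, Nat.card_fun]
  have h1 : Nat.card {b : A // b ≠ a} = Fintype.card A - 1 := by
    rw [Nat.card_eq_fintype_card]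
    have h : Fintype.card {b : A // ¬ b = a} = Fintype.card A - Fintype.card {b : A // b = a} :=
      Fintype.card_subtype_compl _
    simpa [Fintype.card_subtype_eq] using h
  have h2 : Nat.card (Sᶜ : Finset Q) = Fintype.card Q - S.card := by
    simp [Nat.card_eq_fintype_card, Finset.card_compl]
  rw [h1, h2]

private lemma count_eq {Q A : Type} [Finite Q] [Fintype A] (a : A) (j : ℕ) :
    Nat.card {f : Q → A // Nat.card {q : Q // f q = a} = j} =
      Nat.choose (Nat.card Q) j * (Fintype.card A - 1) ^ (Nat.card Q - j) := by
  classical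
  haveI : Fintype Q := Fintype.ofFinite Q
  have hcount : ∀ f : Q → A, Nat.card {q : Q // f q = a} =
      (Finset.univ.filter (fun q => f q = a)).card := by
    intro f
    rw [Nat.card_eq_fintype_card, Fintype.card_subtype]
  rw [Nat.card_eq_fintype_card, Nat.card_eq_fintype_card, Fintype.card_subtype]
  have key : (Finset.univ.filter
        (fun f : Q → A => Nat.card {q : Q // f q = a} = j)).card =
      ∑ S ∈ Finset.powersetCard j (Finset.univ : Finset Q),
        ((Finset.univ.filter (fun f : Q → A => Nat.card {q : Q // f q = a} = j)).filter
          (fun f : Q → A => Finset.univ.filter (fun q => f q = a) = S)).card := by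
    apply Finset.card_eq_sum_card_fiberwise
      (f := fun f : Q → A => Finset.univ.filter (fun q => f q = a))
    intro f hf
    simp only [Finset.mem_coe, Finset.mem_filter] at hf
    simp only [Finset.mem_coe, Finset.mem_powersetCard]
    exact ⟨Finset.subset_univ _, by rw [← hcount f]; exact hf.2⟩
  rw [key]
  have hfib : ∀ S ∈ Finset.powersetCard j (Finset.univ : Finset Q),
      ((Finset.univ.filter (fun f : Q → A => Nat.card {q : Q // f q = a} = j)).filter
          (fun f : Q → A => Finset.univ.filter (fun q => f q = a) = S)).card =
      (Fintype.card A - 1) ^ (Fintype.card Q - j) := by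
    intro S hS
    rw [Finset.mem_powersetCard] at hS
    have heq : ((Finset.univ.filter (fun f : Q → A => Nat.card {q : Q // f q = a} = j)).filter
          (fun f : Q → A => Finset.univ.filter (fun q => f q = a) = S)) =
        Finset.univ.filter (fun f : Q → A => Finset.univ.filter (fun q => f q = a) = S) := by
      rw [Finset.filter_filter]
      apply Finset.filter_congr
      intro f _
      simp only [and_iff_right_iff_imp]
      intro h
      rw [hcount f, h, hS.2]
    rw [heq, ← Fintype.card_subtype, ← Nat.card_eq_fintype_card, fiber_count a S, hS.2]
  rw [Finset.sum_congr rfl hfib, Finset.sum_const, Finset.card_powersetCard,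
    Finset.card_univ, smul_eq_mul]

theorem stmt_19 (n : ℕ) (hn : 1 ≤ n) (A : Type) [Fintype A] (a : A)
    (v : ZMod n × ZMod n) (hv : v ≠ 0) (k : ℕ)
    (hdvd : Nat.card (AddSubgroup.zmultiples v) ∣ k) (hk : k ≤ n ^ 2) :
    Nat.card {s : ZMod n × ZMod n → A //
        (∀ u, s u = s (u + v)) ∧ Nat.card {u : ZMod n × ZMod n // s u = a} = k} =
      Nat.choose (n ^ 2 / Nat.card (AddSubgroup.zmultiples v))
          (k / Nat.card (AddSubgroup.zmultiples v)) *
        (Fintype.card A - 1) ^ ((n ^ 2 - k) / Nat.card (AddSubgroup.zmultiples v)) := by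
  classical
  haveI : NeZero n := ⟨by omega⟩
  set H : AddSubgroup (ZMod n × ZMod n) := AddSubgroup.zmultiples v with hH
  set m := Nat.card H with hm
  have hm_pos : 0 < m := Nat.card_pos
  -- shift invariance implies invariance under all multiples of v
  have shift_inv : ∀ s : ZMod n × ZMod n → A, (∀ u, s u = s (u + v)) →
      ∀ (z : ℤ) (u : (ZMod n × ZMod n)), s (u + z • v) = s u := by
    intro s hs z
    induction z using Int.induction_on with
    | zero => intro u; simp
    | succ i ih =>
        intro u
        have h1 : ((i : ℤ) + 1) • v = (i : ℤ) • v + v := by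
          rw [add_zsmul, one_zsmul]
        rw [h1, ← add_assoc, ← hs (u + (i : ℤ) • v), ih u]
    | pred i ih =>
        intro u
        have h1 : u + (-(i : ℤ) - 1) • v + v = u + (-(i : ℤ)) • v := by
          rw [sub_zsmul, one_zsmul]; abel
        calc s (u + (-(i : ℤ) - 1) • v) = s (u + (-(i : ℤ) - 1) • v + v) :=
              hs (u + (-(i : ℤ) - 1) • v)
          _ = s (u + (-(i : ℤ)) • v) := by rw [h1]
          _ = s u := ih u
  have inv' : ∀ s : ZMod n × ZMod n → A, (∀ u, s u = s (u + v)) →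
      ∀ u u' : (ZMod n × ZMod n), -u + u' ∈ H → s u = s u' := by
    intro s hs u u' hmem
    obtain ⟨z, hz⟩ := AddSubgroup.mem_zmultiples_iff.mp hmem
    have : u' = u + z • v := by rw [hz]; abel
    rw [this, shift_inv s hs z u]
  -- equivalence between quotient functions and shift-invariant functions
  have hvH : v ∈ H := AddSubgroup.mem_zmultiples v
  let E0 : ((ZMod n × ZMod n) ⧸ H → A) ≃ {s : ZMod n × ZMod n → A // ∀ u, s u = s (u + v)} := {
    toFun := fun f => ⟨fun u => f (QuotientAddGroup.mk u), fun u => by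
      have : (QuotientAddGroup.mk u : (ZMod n × ZMod n) ⧸ H) = QuotientAddGroup.mk (u + v) := by
        rw [QuotientAddGroup.eq]
        simpa using hvH
      simp only [this]⟩
    invFun := fun s => fun q => Quotient.liftOn' q s.1 (fun u u' h => by
      rw [QuotientAddGroup.leftRel_apply] at h
      exact inv' s.1 s.2 u u' h)
    left_inv := fun f => by
      funext q
      induction q using QuotientAddGroup.induction_on with
      | H u => rfl
    right_inv := fun s => by
      apply Subtype.ext
      funext u
      rfl }
  -- fiber counting: for f : (ZMod n × ZMod n) ⧸ H → A,
  -- Nat.card {u // f (mk u) = a} = m * Nat.card {q // f q = a}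
  have hfiber : ∀ q : (ZMod n × ZMod n) ⧸ H, Nat.card {u : ZMod n × ZMod n // (QuotientAddGroup.mk u : (ZMod n × ZMod n) ⧸ H) = q} = m := by
    intro q
    induction q using QuotientAddGroup.induction_on with
    | H u₀ =>
      refine Nat.card_congr {
        toFun := fun u => ⟨u.1 - u₀, ?_⟩
        invFun := fun h => ⟨u₀ + h.1, ?_⟩
        left_inv := fun u => by simp
        right_inv := fun h => by simp }
      · have := QuotientAddGroup.eq.mp u.2
        have h2 : u.1 - u₀ = -(-u.1 + u₀) := by abel
        rw [h2]
        exact neg_mem this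
      · rw [QuotientAddGroup.eq]
        have h2 : -(u₀ + h.1) + u₀ = -h.1 := by abel
        rw [h2]
        exact neg_mem h.2
  have hcard_mul : ∀ f : (ZMod n × ZMod n) ⧸ H → A,
      Nat.card {u : ZMod n × ZMod n // f (QuotientAddGroup.mk u) = a} =
        m * Nat.card {q : (ZMod n × ZMod n) ⧸ H // f q = a} := by
    intro f
    have e : {u : ZMod n × ZMod n // f (QuotientAddGroup.mk u) = a} ≃
        Σ q : {q : (ZMod n × ZMod n) ⧸ H // f q = a}, {u : ZMod n × ZMod n // (QuotientAddGroup.mk u : (ZMod n × ZMod n) ⧸ H) = q.1} :=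
      (Equiv.sigmaSubtypeFiberEquivSubtype
        (fun u : ZMod n × ZMod n => (QuotientAddGroup.mk u : (ZMod n × ZMod n) ⧸ H))
        (p := fun u : ZMod n × ZMod n => f (QuotientAddGroup.mk u) = a)
        (q := fun t : (ZMod n × ZMod n) ⧸ H => f t = a) (fun _ => Iff.rfl)).symm
    rw [Nat.card_congr e]
    haveI : Fintype ((ZMod n × ZMod n) ⧸ H) := Fintype.ofFinite _
    haveI : ∀ q : {q : (ZMod n × ZMod n) ⧸ H // f q = a},
        Fintype {u : ZMod n × ZMod n // (QuotientAddGroup.mk u : (ZMod n × ZMod n) ⧸ H) = q.1} := fun q =>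
      Fintype.ofFinite _
    rw [Nat.card_eq_fintype_card, Fintype.card_sigma]
    have : ∀ q : {q : (ZMod n × ZMod n) ⧸ H // f q = a},
        Fintype.card {u : ZMod n × ZMod n // (QuotientAddGroup.mk u : (ZMod n × ZMod n) ⧸ H) = q.1} = m := by
      intro q
      rw [← Nat.card_eq_fintype_card]
      exact hfiber q.1
    rw [Finset.sum_congr rfl (fun q _ => this q), Finset.sum_const, Finset.card_univ,
      smul_eq_mul, ← Nat.card_eq_fintype_card, mul_comm]
  -- main equivalence
  obtain ⟨j, hj⟩ := hdvd
  have hdvd_iff : ∀ f : (ZMod n × ZMod n) ⧸ H → A,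
      (Nat.card {q : (ZMod n × ZMod n) ⧸ H // f q = a} = k / m ↔
        Nat.card {u : ZMod n × ZMod n // f (QuotientAddGroup.mk u) = a} = k) := by
    intro f
    rw [hcard_mul f, hj, Nat.mul_div_cancel_left j hm_pos]
    constructor
    · intro h; rw [h]
    · intro h; exact Nat.eq_of_mul_eq_mul_left hm_pos h
  have E : {f : (ZMod n × ZMod n) ⧸ H → A // Nat.card {q : (ZMod n × ZMod n) ⧸ H // f q = a} = k / m} ≃
      {s : ZMod n × ZMod n → A // (∀ u, s u = s (u + v)) ∧ Nat.card {u : ZMod n × ZMod n // s u = a} = k} := {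
    toFun := fun f => ⟨(E0 f.1).1, (E0 f.1).2, (hdvd_iff f.1).mp f.2⟩
    invFun := fun s => ⟨E0.symm ⟨s.1, s.2.1⟩, by
      rw [hdvd_iff]
      have he : (fun u : ZMod n × ZMod n => (E0.symm ⟨s.1, s.2.1⟩ : (ZMod n × ZMod n) ⧸ H → A) (QuotientAddGroup.mk u))
          = s.1 :=
        congrArg (fun t : {s : ZMod n × ZMod n → A // ∀ u, s u = s (u + v)} => t.1)
          (E0.apply_symm_apply ⟨s.1, s.2.1⟩)
      have hpt : ∀ u : (ZMod n × ZMod n), (E0.symm ⟨s.1, s.2.1⟩ : (ZMod n × ZMod n) ⧸ H → A) (QuotientAddGroup.mk u) = s.1 u :=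
        fun u => congrFun he u
      simp only [hpt]
      exact s.2.2⟩
    left_inv := fun f => by
      apply Subtype.ext
      show E0.symm ⟨(E0 f.1).1, (E0 f.1).2⟩ = f.1
      exact E0.symm_apply_apply f.1
    right_inv := fun s => by
      apply Subtype.ext
      show (E0 (E0.symm ⟨s.1, s.2.1⟩)).1 = s.1
      exact congrArg (fun t : {s : ZMod n × ZMod n → A // ∀ u, s u = s (u + v)} => t.1)
        (E0.apply_symm_apply ⟨s.1, s.2.1⟩) }
  rw [← Nat.card_congr E, count_eq a (k / m)]
  -- now compute Nat.card ((ZMod n × ZMod n) ⧸ H)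
  have hcardG : Nat.card (ZMod n × ZMod n) = n ^ 2 := by
    rw [Nat.card_eq_fintype_card]
    simp [ZMod.card, sq]
  have hGQ : Nat.card (ZMod n × ZMod n) = Nat.card ((ZMod n × ZMod n) ⧸ H) * m :=
    AddSubgroup.card_eq_card_quotient_mul_card_addSubgroup H
  have hQ : Nat.card ((ZMod n × ZMod n) ⧸ H) = n ^ 2 / m := by
    rw [← hcardG, hGQ, Nat.mul_div_cancel _ hm_pos]
  have hsub : n ^ 2 / m - k / m = (n ^ 2 - k) / m := by
    rw [hj, Nat.mul_div_cancel_left j hm_pos]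
    have hmn : m ∣ n ^ 2 := by
      rw [← hcardG, hGQ]; exact Dvd.intro_left _ rfl
    obtain ⟨Qc, hQc⟩ := hmn
    rw [hQc, Nat.mul_div_cancel_left Qc hm_pos, ← Nat.mul_sub_left_distrib,
      Nat.mul_div_cancel_left _ hm_pos]
  rw [hQ, hsub]
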